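/- arXiv:2407.09692 — 3 statements merged into one kernel-verified Lean document; each statement's English description precedes it below -/
import Mathlib

section
/- For every integer k ≥ 2, the subdivided star T_k (obtained from the star K_{1,k} by subdividing every edge exactly once), which has order n = 2k+1, satisfies γ^IOC(T_k) = 2k = (2k/(2k+1))·n. -/
/-- `S` is an identifying open code of `G`: a total dominating set that is also a
separating open code. -/
def IsIOC {V : Type*} (G : SimpleGraph V) (S : Set V) : Prop :=
  (∀ v : V, ∃ u ∈ S, G.Adj v u) ∧
  ∀ u v : V, u ≠ v → G.neighborSet u ∩ S ≠ G.neighborSet v ∩ S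

/-- The identifying open code number `γ^IOC(G)`. -/
noncomputable def iocNumber {V : Type*} [Fintype V] (G : SimpleGraph V) : ℕ :=
  sInf {n | ∃ S : Finset V, IsIOC G ↑S ∧ S.card = n}

/-- The subdivided star `T_k`: the star `K_{1,k}` with every edge subdivided once.
`none` is the center, `some (i, false)` the support vertices, `some (i, true)` the leaves. -/
def subdividedStar (k : ℕ) : SimpleGraph (Option (Fin k × Bool)) :=
  SimpleGraph.fromRel (fun a b =>
    (a = none ∧ ∃ i, b = some (i, false)) ∨
    (∃ i, a = some (i, false) ∧ b = some (i, true)))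

lemma adj_none (k : ℕ) (u : Option (Fin k × Bool)) :
    (subdividedStar k).Adj none u ↔ ∃ i, u = some (i, false) := by
  simp only [subdividedStar, SimpleGraph.fromRel_adj]
  constructor
  · rintro ⟨h1, (h2 | h2) | (h2 | h2)⟩ <;> aesop
  · rintro ⟨i, rfl⟩; exact ⟨by simp, Or.inl <| Or.inl ⟨trivial, i, rfl⟩⟩

lemma adj_supp (k : ℕ) (i : Fin k) (u : Option (Fin k × Bool)) :
    (subdividedStar k).Adj (some (i, false)) u ↔ u = none ∨ u = some (i, true) := by
  simp only [subdividedStar, SimpleGraph.fromRel_adj]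
  constructor
  · rintro ⟨h1, (h2 | h2) | (h2 | h2)⟩ <;> aesop
  · rintro (rfl | rfl)
    · exact ⟨by simp, Or.inr <| Or.inl ⟨rfl, i, rfl⟩⟩
    · exact ⟨by simp, Or.inl <| Or.inr ⟨i, rfl, rfl⟩⟩

lemma adj_leaf (k : ℕ) (i : Fin k) (u : Option (Fin k × Bool)) :
    (subdividedStar k).Adj (some (i, true)) u ↔ u = some (i, false) := by
  simp only [subdividedStar, SimpleGraph.fromRel_adj]
  constructor
  · rintro ⟨h1, (h2 | h2) | (h2 | h2)⟩ <;> aesop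
  · rintro rfl; exact ⟨by simp, Or.inr <| Or.inr ⟨i, rfl, rfl⟩⟩

lemma cardV (k : ℕ) : Fintype.card (Option (Fin k × Bool)) = 2 * k + 1 := by
  simp [Fintype.card_option, Fintype.card_prod]
  omega

lemma upper_bound (k : ℕ) (hk : 2 ≤ k) :
    ∃ S : Finset (Option (Fin k × Bool)),
      IsIOC (subdividedStar k) ↑S ∧ S.card = 2 * k := by
  refine ⟨Finset.univ.erase none, ⟨?_, ?_⟩, ?_⟩
  · -- total domination
    intro v
    rcases v with _ | ⟨i, b⟩
    · exact ⟨some (⟨0, by omega⟩, false), by simp,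
        (adj_none k _).mpr ⟨⟨0, by omega⟩, rfl⟩⟩
    · cases b
      · exact ⟨some (i, true), by simp, (adj_supp k i _).mpr (Or.inr rfl)⟩
      · exact ⟨some (i, false), by simp, (adj_leaf k i _).mpr rfl⟩
  · -- separating
    intro u v huv h
    have h' : ∀ w : Option (Fin k × Bool),
        ((subdividedStar k).Adj u w ∧ w ≠ none) ↔
        ((subdividedStar k).Adj v w ∧ w ≠ none) := by
      intro w
      have := Set.ext_iff.mp h w
      simpa [Set.mem_inter_iff, SimpleGraph.mem_neighborSet] using this
    rcases u with _ | ⟨i, bi⟩ <;> rcases v with _ | ⟨j, bj⟩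
    · exact huv rfl
    · cases bj
      · have := h' (some (j, true))
        simp [adj_none, adj_supp] at this
      · -- none vs leaf j : pick a support different from j
        obtain ⟨j', hne⟩ := Fintype.exists_ne_of_one_lt_card
          (by simp only [Fintype.card_fin]; omega : 1 < Fintype.card (Fin k)) j
        have := h' (some (j', false))
        simp [adj_none, adj_leaf] at this
        exact hne (by exact_mod_cast this)
    · cases bi
      · have := h' (some (i, true))
        simp [adj_none, adj_supp] at this
      · obtain ⟨i', hne⟩ := Fintype.exists_ne_of_one_lt_card
          (by simp only [Fintype.card_fin]; omega : 1 < Fintype.card (Fin k)) i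
        have := h' (some (i', false))
        simp [adj_none, adj_leaf] at this
        exact hne (by exact_mod_cast this)
    · cases bi <;> cases bj
      · -- supports i ≠ j
        have hij : i ≠ j := by rintro rfl; exact huv rfl
        have := h' (some (i, true))
        simp [adj_supp] at this
        exact hij (by exact_mod_cast this)
      · have := h' (some (i, true))
        simp [adj_supp, adj_leaf] at this
      · have := h' (some (j, true))
        simp [adj_supp, adj_leaf] at this
      · have hij : i ≠ j := by rintro rfl; exact huv rfl
        have := h' (some (i, false))
        simp [adj_leaf] at this
        exact hij (by exact_mod_cast this)
  · rw [Finset.card_erase_of_mem (Finset.mem_univ _), Finset.card_univ, cardV]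
    omega

lemma lower_bound (k : ℕ) (hk : 2 ≤ k) (S : Finset (Option (Fin k × Bool)))
    (hS : IsIOC (subdividedStar k) ↑S) : 2 * k ≤ S.card := by
  obtain ⟨hdom, hsep⟩ := hS
  have hsupp : ∀ i : Fin k, some (i, false) ∈ S := by
    intro i
    obtain ⟨u, hu, hadj⟩ := hdom (some (i, true))
    rw [adj_leaf] at hadj
    rwa [hadj] at hu
  have key : ∃ x, Finset.univ.erase x ⊆ S := by
    by_cases hall : ∀ i : Fin k, some (i, true) ∈ S
    · refine ⟨none, fun x hx => ?_⟩
      rcases x with _ | ⟨i, b⟩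
      · simp at hx
      · cases b
        · exact hsupp i
        · exact hall i
    · push_neg at hall
      obtain ⟨i₀, hi₀⟩ := hall
      have hc : none ∈ S := by
        obtain ⟨u, hu, hadj⟩ := hdom (some (i₀, false))
        rw [adj_supp] at hadj
        rcases hadj with rfl | rfl
        · exact hu
        · exact (hi₀ hu).elim
      have hleaf : ∀ j : Fin k, j ≠ i₀ → some (j, true) ∈ S := by
        intro j hne
        by_contra hj
        refine hsep (some (i₀, false)) (some (j, false)) (by simp [hne.symm]) ?_
        ext w
        simp only [Set.mem_inter_iff, SimpleGraph.mem_neighborSet, adj_supp,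
          Finset.mem_coe]
        constructor
        · rintro ⟨rfl | rfl, hw⟩
          · exact ⟨Or.inl rfl, hw⟩
          · exact (hi₀ hw).elim
        · rintro ⟨rfl | rfl, hw⟩
          · exact ⟨Or.inl rfl, hw⟩
          · exact (hj hw).elim
      refine ⟨some (i₀, true), fun x hx => ?_⟩
      rcases x with _ | ⟨i, b⟩
      · exact hc
      · cases b
        · exact hsupp i
        · refine hleaf i fun hEq => ?_
          rw [Finset.mem_erase] at hx
          exact hx.1 (by rw [hEq])
  obtain ⟨x, hsub⟩ := key
  have := Finset.card_le_card hsub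
  rw [Finset.card_erase_of_mem (Finset.mem_univ _), Finset.card_univ, cardV] at this
  omega

theorem stmt0 (k : ℕ) (hk : 2 ≤ k) :
    Fintype.card (Option (Fin k × Bool)) = 2 * k + 1 ∧
    iocNumber (subdividedStar k) = 2 * k := by
  refine ⟨cardV k, ?_⟩
  obtain ⟨S₀, hIOC, hcard⟩ := upper_bound k hk
  refine le_antisymm (Nat.sInf_le ⟨S₀, hIOC, hcard⟩) ?_
  refine le_csInf ⟨2 * k, S₀, hIOC, hcard⟩ ?_
  rintro n ⟨S, hS, rfl⟩
  exact lower_bound k hk S hS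
end

section
/- For every integer k ≥ 3, the reduced subdivided star T_k* (obtained from the subdivided star T_k by removing exactly one leaf), which has order n = 2k, satisfies γ^IOC(T_k*) = 2k−1 = ((2k−1)/(2k))·n. -/
namespace StmtAux

variable {k : ℕ}

lemma adj_none_some (i : Fin k) (b : Bool) :
    (subdividedStar k).Adj none (some (i, b)) ↔ b = false := by
  cases b <;> simp [subdividedStar]

lemma adj_none_none : ¬ (subdividedStar k).Adj none none := by
  simp [subdividedStar]

lemma adj_some_some (i j : Fin k) (b c : Bool) :
    (subdividedStar k).Adj (some (i, b)) (some (j, c)) ↔ i = j ∧ b ≠ c := by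
  cases b <;> cases c <;> simp [subdividedStar, eq_comm (a := i)]

variable (h0 : 0 < k)

/-- The vertex set of the reduced subdivided star. -/
abbrev RS (k : ℕ) (h0 : 0 < k) : Set (Option (Fin k × Bool)) :=
  {x | x ≠ some (⟨0, h0⟩, true)}

abbrev G' (k : ℕ) (h0 : 0 < k) : SimpleGraph (RS k h0) :=
  SimpleGraph.induce (RS k h0) (subdividedStar k)

/-- the center -/
def c : RS k h0 := ⟨none, by simp⟩

/-- support vertices -/
def sv (i : Fin k) : RS k h0 := ⟨some (i, false), by simp⟩

/-- leaves -/
def lv (i : Fin k) (hi : i ≠ ⟨0, h0⟩) : RS k h0 :=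
  ⟨some (i, true), by simp [hi]⟩

lemma adjC (w : RS k h0) : (G' k h0).Adj (c h0) w ↔ ∃ i, w.val = some (i, false) := by
  obtain ⟨x, hx⟩ := w
  rcases x with _ | ⟨j, b⟩
  · simpa [c] using adj_none_none
  · cases b <;> simp [c, adj_none_some]

lemma adjS (i : Fin k) (w : RS k h0) :
    (G' k h0).Adj (sv h0 i) w ↔ w.val = none ∨ w.val = some (i, true) := by
  obtain ⟨x, hx⟩ := w
  rcases x with _ | ⟨j, b⟩
  · simp [sv, (subdividedStar k).adj_comm, adj_none_some]
  · cases b <;> simp [sv, adj_some_some, eq_comm (a := i)]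

lemma adjL (i : Fin k) (hi : i ≠ ⟨0, h0⟩) (w : RS k h0) :
    (G' k h0).Adj (lv h0 i hi) w ↔ w.val = some (i, false) := by
  obtain ⟨x, hx⟩ := w
  rcases x with _ | ⟨j, b⟩
  · simp [lv, (subdividedStar k).adj_comm, adj_none_some]
  · cases b <;> simp [lv, adj_some_some, eq_comm (a := i)]

lemma c_ne_sv (i : Fin k) : c h0 ≠ sv h0 i := by
  simp [c, sv, Subtype.ext_iff]

lemma sv_ne_lv (i j : Fin k) (hj : j ≠ ⟨0, h0⟩) : sv h0 i ≠ lv h0 j hj := by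
  simp [sv, lv, Subtype.ext_iff]

lemma sv_inj {i j : Fin k} : sv h0 i = sv h0 j ↔ i = j := by
  simp [sv, Subtype.ext_iff]

lemma lv_inj {i j : Fin k} (hi : i ≠ ⟨0, h0⟩) (hj : j ≠ ⟨0, h0⟩) :
    lv h0 i hi = lv h0 j hj ↔ i = j := by
  simp [lv, Subtype.ext_iff]

/-- every vertex is the center, a support vertex, or a leaf -/
lemma vertex_cases (v : RS k h0) :
    v = c h0 ∨ (∃ i, v = sv h0 i) ∨ (∃ i hi, v = lv h0 i hi) := by
  obtain ⟨x, hx⟩ := v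
  rcases x with _ | ⟨j, b⟩
  · exact Or.inl rfl
  · cases b
    · exact Or.inr (Or.inl ⟨j, rfl⟩)
    · refine Or.inr (Or.inr ⟨j, ?_, rfl⟩)
      intro h
      exact hx (by simp [h])

section Main

variable (hk : 3 ≤ k) [Fintype (RS k h0)]

/-- index 1 -/
def i1 : Fin k := ⟨1, by omega⟩
/-- index 2 -/
def i2 : Fin k := ⟨2, by omega⟩

lemma i1_ne_zero : i1 hk ≠ (⟨0, h0⟩ : Fin k) := by
  simp [i1, Fin.ext_iff]

lemma i2_ne_zero : i2 hk ≠ (⟨0, h0⟩ : Fin k) := by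
  simp [i2, Fin.ext_iff]

lemma cardV : Fintype.card (RS k h0) = 2 * k := by
  classical
  have e : RS k h0 ≃ {x : Option (Fin k × Bool) // ¬ (x = some (⟨0, h0⟩, true))} :=
    Equiv.subtypeEquivRight (fun x => Iff.rfl)
  rw [Fintype.card_congr e, Fintype.card_subtype_compl, Fintype.card_subtype_eq]
  simp
  omega

/-- The witness set: everything but `sv 0`. -/
def W : Finset (RS k h0) := Finset.univ.erase (sv h0 ⟨0, h0⟩)

lemma mem_W (v : RS k h0) : v ∈ W h0 ↔ v ≠ sv h0 ⟨0, h0⟩ := by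
  simp [W]

lemma cardW : (W h0).card = 2 * k - 1 := by
  rw [W, Finset.card_erase_of_mem (Finset.mem_univ _), Finset.card_univ, cardV h0]

lemma code_mem (v w : RS k h0) :
    w ∈ (G' k h0).neighborSet v ∩ ↑(W h0) ↔
      (G' k h0).Adj v w ∧ w ≠ sv h0 ⟨0, h0⟩ := by
  constructor
  · rintro ⟨h1, h2⟩
    exact ⟨h1, (mem_W h0 w).mp h2⟩
  · rintro ⟨h1, h2⟩
    exact ⟨h1, (mem_W h0 w).mpr h2⟩

include hk in
lemma W_isIOC : IsIOC (G' k h0) ↑(W h0) := by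
  constructor
  · -- total domination
    intro v
    rcases vertex_cases h0 v with rfl | ⟨i, rfl⟩ | ⟨i, hi, rfl⟩
    · refine ⟨sv h0 (i1 hk), Finset.mem_coe.mpr ((mem_W h0 _).mpr ?_), ?_⟩
      · rw [Ne, sv_inj]; exact i1_ne_zero h0 hk
      · rw [adjC]; exact ⟨i1 hk, rfl⟩
    · refine ⟨c h0, Finset.mem_coe.mpr ((mem_W h0 _).mpr (c_ne_sv h0 _)), ?_⟩
      rw [(G' k h0).adj_comm, adjC]; exact ⟨i, rfl⟩
    · refine ⟨sv h0 i, Finset.mem_coe.mpr ((mem_W h0 _).mpr ?_), ?_⟩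
      · rw [Ne, sv_inj]; exact hi
      · rw [(G' k h0).adj_comm, adjS]; exact Or.inr rfl
  · -- separation
    have L1 : ∀ j : Fin k,
        (G' k h0).neighborSet (c h0) ∩ ↑(W h0) ≠
        (G' k h0).neighborSet (sv h0 j) ∩ ↑(W h0) := by
      intro j
      apply ne_of_mem_of_not_mem' (a := sv h0 (i1 hk))
      · refine (code_mem h0 _ _).mpr ⟨?_, ?_⟩
        · rw [adjC]; exact ⟨_, rfl⟩
        · rw [Ne, sv_inj]; exact i1_ne_zero h0 hk
      · intro hmem
        have := ((code_mem h0 _ _).mp hmem).1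
        rw [adjS] at this
        simp [sv] at this
    have L2 : ∀ (j : Fin k) (hj : j ≠ ⟨0, h0⟩),
        (G' k h0).neighborSet (c h0) ∩ ↑(W h0) ≠
        (G' k h0).neighborSet (lv h0 j hj) ∩ ↑(W h0) := by
      intro j hj
      by_cases hj1 : j = i1 hk
      · apply ne_of_mem_of_not_mem' (a := sv h0 (i2 hk))
        · refine (code_mem h0 _ _).mpr ⟨?_, ?_⟩
          · rw [adjC]; exact ⟨_, rfl⟩
          · rw [Ne, sv_inj]; exact i2_ne_zero h0 hk
        · intro hmem
          have := ((code_mem h0 _ _).mp hmem).1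
          rw [adjL] at this
          simp only [sv, Option.some.injEq, Prod.mk.injEq, and_true] at this
          subst hj1
          exact absurd this (by simp [i1, i2, Fin.ext_iff])
      · apply ne_of_mem_of_not_mem' (a := sv h0 (i1 hk))
        · refine (code_mem h0 _ _).mpr ⟨?_, ?_⟩
          · rw [adjC]; exact ⟨_, rfl⟩
          · rw [Ne, sv_inj]; exact i1_ne_zero h0 hk
        · intro hmem
          have := ((code_mem h0 _ _).mp hmem).1
          rw [adjL] at this
          simp only [sv, Option.some.injEq, Prod.mk.injEq, and_true] at this
          exact hj1 this.symm
    have L4 : ∀ (i j : Fin k) (hj : j ≠ ⟨0, h0⟩),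
        (G' k h0).neighborSet (sv h0 i) ∩ ↑(W h0) ≠
        (G' k h0).neighborSet (lv h0 j hj) ∩ ↑(W h0) := by
      intro i j hj
      apply ne_of_mem_of_not_mem' (a := c h0)
      · refine (code_mem h0 _ _).mpr ⟨?_, c_ne_sv h0 _⟩
        rw [adjS]; exact Or.inl rfl
      · intro hmem
        have := ((code_mem h0 _ _).mp hmem).1
        rw [adjL] at this
        simp [c] at this
    have L3 : ∀ (i j : Fin k), i ≠ j →
        (G' k h0).neighborSet (sv h0 i) ∩ ↑(W h0) ≠
        (G' k h0).neighborSet (sv h0 j) ∩ ↑(W h0) := by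
      intro i j hij
      by_cases hi0 : i = ⟨0, h0⟩
      · have hj0 : j ≠ ⟨0, h0⟩ := fun h => hij (hi0.trans h.symm)
        refine Ne.symm (ne_of_mem_of_not_mem' (a := lv h0 j hj0) ?_ ?_)
        · refine (code_mem h0 _ _).mpr ⟨?_, (sv_ne_lv h0 _ _ _).symm⟩
          rw [(G' k h0).adj_comm, adjL]
          rfl
        · intro hmem
          have := ((code_mem h0 _ _).mp hmem).1
          rw [adjS] at this
          simp only [lv, Option.some.injEq, Prod.mk.injEq, and_true,
            reduceCtorEq, false_or] at this
          exact hij this.symm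
      · apply ne_of_mem_of_not_mem' (a := lv h0 i hi0)
        · refine (code_mem h0 _ _).mpr ⟨?_, (sv_ne_lv h0 _ _ _).symm⟩
          rw [(G' k h0).adj_comm, adjL]
          rfl
        · intro hmem
          have := ((code_mem h0 _ _).mp hmem).1
          rw [adjS] at this
          simp only [lv, Option.some.injEq, Prod.mk.injEq, and_true,
            reduceCtorEq, false_or] at this
          exact hij this
    have L5 : ∀ (i : Fin k) (hi : i ≠ ⟨0, h0⟩) (j : Fin k) (hj : j ≠ ⟨0, h0⟩),
        i ≠ j → (G' k h0).neighborSet (lv h0 i hi) ∩ ↑(W h0) ≠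
        (G' k h0).neighborSet (lv h0 j hj) ∩ ↑(W h0) := by
      intro i hi j hj hij
      apply ne_of_mem_of_not_mem' (a := sv h0 i)
      · refine (code_mem h0 _ _).mpr ⟨?_, ?_⟩
        · rw [adjL]
          rfl
        · rw [Ne, sv_inj]; exact hi
      · intro hmem
        have := ((code_mem h0 _ _).mp hmem).1
        rw [adjL] at this
        simp only [sv, Option.some.injEq, Prod.mk.injEq, and_true] at this
        exact hij this
    intro u v huv
    rcases vertex_cases h0 u with rfl | ⟨i, rfl⟩ | ⟨i, hi, rfl⟩ <;>
      rcases vertex_cases h0 v with rfl | ⟨j, rfl⟩ | ⟨j, hj, rfl⟩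
    · exact absurd rfl huv
    · exact L1 j
    · exact L2 j hj
    · exact (L1 i).symm
    · exact L3 i j (fun h => huv (by rw [sv_inj]; exact h))
    · exact L4 i j hj
    · exact (L2 i hi).symm
    · exact (L4 j i hi).symm
    · exact L5 i hi j hj (fun h => huv (by rw [lv_inj]; exact h))

lemma lower (S : Finset (RS k h0)) (h : IsIOC (G' k h0) ↑S) : 2 * k - 1 ≤ S.card := by
  obtain ⟨hTD, hSep⟩ := h
  have hc : c h0 ∈ S := by
    obtain ⟨u, hu, hadj⟩ := hTD (sv h0 ⟨0, h0⟩)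
    rw [adjS] at hadj
    rcases hadj with h | h
    · rwa [show u = c h0 from Subtype.ext h] at hu
    · exact absurd h u.2
  have hs : ∀ i : Fin k, sv h0 i ∈ S → True := fun _ _ => trivial
  have hsupp : ∀ (i : Fin k) (hi : i ≠ ⟨0, h0⟩), sv h0 i ∈ S := by
    intro i hi
    obtain ⟨u, hu, hadj⟩ := hTD (lv h0 i hi)
    rw [adjL] at hadj
    rwa [show u = sv h0 i from Subtype.ext hadj] at hu
  have hl : ∀ (i : Fin k) (hi : i ≠ ⟨0, h0⟩), lv h0 i hi ∈ S := by
    intro i hi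
    by_contra hnot
    apply hSep (sv h0 ⟨0, h0⟩) (sv h0 i)
      (fun h => hi (((sv_inj h0).mp h).symm))
    ext w
    simp only [Set.mem_inter_iff, SimpleGraph.mem_neighborSet, adjS]
    constructor
    · rintro ⟨h1 | h1, h2⟩
      · exact ⟨Or.inl h1, h2⟩
      · exact absurd h1 w.2
    · rintro ⟨h1 | h1, h2⟩
      · exact ⟨Or.inl h1, h2⟩
      · have hw : w = lv h0 i hi := Subtype.ext h1
        rw [hw] at h2
        exact absurd (Finset.mem_coe.mp h2) hnot
  have hsub : W h0 ⊆ S := by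
    intro v hv
    rcases vertex_cases h0 v with rfl | ⟨i, rfl⟩ | ⟨i, hi, rfl⟩
    · exact hc
    · refine hsupp i ?_
      intro h
      exact ((mem_W h0 _).mp hv) (by rw [sv_inj]; exact h)
    · exact hl i hi
  calc 2 * k - 1 = (W h0).card := (cardW h0).symm
    _ ≤ S.card := Finset.card_le_card hsub

include hk in
lemma ioc_eq : iocNumber (G' k h0) = 2 * k - 1 := by
  have hmem : (2 * k - 1) ∈
      {n | ∃ S : Finset (RS k h0), IsIOC (G' k h0) ↑S ∧ S.card = n} :=
    ⟨W h0, W_isIOC h0 hk, cardW h0⟩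
  refine le_antisymm (Nat.sInf_le hmem) (le_csInf ⟨_, hmem⟩ ?_)
  rintro n ⟨S, hS, rfl⟩
  exact lower h0 S hS

end Main

end StmtAux

/-- The reduced subdivided star `T_k*` is `T_k` with the leaf `some (0, true)` removed. -/
theorem stmt1 (k : ℕ) (hk : 3 ≤ k) :
    Fintype.card ({x : Option (Fin k × Bool) // x ≠ some (⟨0, by omega⟩, true)}) = 2 * k ∧
    iocNumber ((subdividedStar k).induce
      {x : Option (Fin k × Bool) | x ≠ some (⟨0, by omega⟩, true)}) = 2 * k - 1 := by
  have h0 : 0 < k := by omega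
  constructor
  · classical
    rw [Fintype.card_subtype_compl, Fintype.card_subtype_eq]
    simp
    omega
  · exact StmtAux.ioc_eq h0 hk
end

section
/- Let G be a graph with no 4-cycle, let e = uv be an edge of G lying on an induced cycle, and let G' = G − e. If S is an identifying open code of G', then S is also an identifying open code of G. -/
lemma stmt12_aux {V : Type*} (G : SimpleGraph V)
    (no4 : ∀ a b c d : V, G.Adj a b → G.Adj b c → G.Adj c d → G.Adj d a →
      a = c ∨ b = d)
    (u v : V) (huv : G.Adj u v) (S : Set V)
    (hdom : ∀ z : V, ∃ s ∈ S, (G.deleteEdges {s(u, v)}).Adj z s)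
    (x y w : V) (hxy : x ≠ y)
    (h : G.neighborSet x ∩ S = G.neighborSet y ∩ S)
    (hw : w ∈ S) (hyw : G.Adj y w)
    (hxweq : s(x, w) = s(u, v)) : False := by
  rw [Sym2.eq_iff] at hxweq
  rcases hxweq with ⟨hx, hwv⟩ | ⟨hx, hwu⟩
  · subst hx; subst hwv
    obtain ⟨s, hs, hadj⟩ := hdom x
    rw [SimpleGraph.deleteEdges_adj, Set.mem_singleton_iff] at hadj
    have hsw : s ≠ w := fun h' => hadj.2 (by rw [h'])
    have hys : G.Adj y s := by
      have hmem : s ∈ G.neighborSet x ∩ S := ⟨hadj.1, hs⟩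
      rw [h] at hmem
      exact hmem.1
    rcases no4 x s y w hadj.1 hys.symm hyw huv.symm with h1 | h2
    · exact hxy h1
    · exact hsw h2
  · subst hx; subst hwu
    obtain ⟨s, hs, hadj⟩ := hdom x
    rw [SimpleGraph.deleteEdges_adj, Set.mem_singleton_iff] at hadj
    have hsw : s ≠ w := fun h' => hadj.2 (by rw [h', Sym2.eq_swap])
    have hys : G.Adj y s := by
      have hmem : s ∈ G.neighborSet x ∩ S := ⟨hadj.1, hs⟩
      rw [h] at hmem
      exact hmem.1
    rcases no4 x s y w hadj.1 hys.symm hyw huv with h1 | h2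
    · exact hxy h1
    · exact hsw h2

theorem stmt12 {V : Type*} (G : SimpleGraph V)
    (no4 : ∀ a b c d : V, G.Adj a b → G.Adj b c → G.Adj c d → G.Adj d a →
      a = c ∨ b = d)
    (u v : V) (huv : G.Adj u v)
    (c : G.Walk u u) (hc : c.IsCycle) (he : s(u, v) ∈ c.edges)
    (hind : ∀ x ∈ c.support, ∀ y ∈ c.support, G.Adj x y → s(x, y) ∈ c.edges)
    (S : Set V) (hS : IsIOC (G.deleteEdges {s(u, v)}) S) :
    IsIOC G S := by
  obtain ⟨hdom, hsep⟩ := hS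
  constructor
  · intro z
    obtain ⟨s, hs, hadj⟩ := hdom z
    rw [SimpleGraph.deleteEdges_adj] at hadj
    exact ⟨s, hs, hadj.1⟩
  · intro x y hxy h
    have hne := hsep x y hxy
    rw [Ne, Set.ext_iff, not_forall] at hne
    obtain ⟨w, hw⟩ := hne
    simp only [Set.mem_inter_iff, SimpleGraph.mem_neighborSet,
      SimpleGraph.deleteEdges_adj, Set.mem_singleton_iff] at hw
    have hiff := Set.ext_iff.mp h w
    simp only [Set.mem_inter_iff, SimpleGraph.mem_neighborSet] at hiff
    by_cases hwS : w ∈ S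
    · by_cases hax : G.Adj x w
      · have hay : G.Adj y w := (hiff.mp ⟨hax, hwS⟩).1
        by_cases hex : s(x, w) = s(u, v)
        · exact stmt12_aux G no4 u v huv S hdom x y w hxy h hwS hay hex
        · have hey : s(y, w) = s(u, v) := by tauto
          exact stmt12_aux G no4 u v huv S hdom y x w hxy.symm h.symm hwS hax hey
      · have hay : ¬ G.Adj y w := fun hay => hax (hiff.mpr ⟨hay, hwS⟩).1
        tauto
    · tauto
end
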